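/- Let a₁ ≥ a₂ ≥ ⋯ ≥ aₙ be positive integers with gcd(a₁, ..., aₙ) = 1 and a₁ ≥ 2, and let p be a prime dividing a₁. Let k be the smallest index with p ∤ aₖ. If m ≥ 1 and indices i₁, ..., iₘ satisfy ((a₁ + aₖ)/2)^m = a_{i₁} ⋯ a_{iₘ} (with a₁ + aₖ even), then p divides none of a_{i₁}, ..., a_{iₘ} and hence each a_{iᵣ} ≤ aₖ, giving the contradiction ((a₁ + aₖ)/2)^m ≤ aₖ^m < ((a₁ + aₖ)/2)^m. -/

import Mathlib

theorem stmt_12 (n : ℕ) (hn : 0 < n) (a : Fin n → ℕ) (hpos : ∀ i, 0 < a i)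
    (hanti : ∀ i j : Fin n, i ≤ j → a j ≤ a i)
    (hgcd : Finset.univ.gcd a = 1) (ha1 : 2 ≤ a ⟨0, hn⟩)
    (p : ℕ) (hp : p.Prime) (hpa1 : p ∣ a ⟨0, hn⟩)
    (k : Fin n) (hk : ¬ p ∣ a k) (hkmin : ∀ i : Fin n, i < k → p ∣ a i)
    (m : ℕ) (hm : 1 ≤ m) (f : Fin m → Fin n)
    (heven : 2 ∣ a ⟨0, hn⟩ + a k)
    (hgm : ((a ⟨0, hn⟩ + a k) / 2) ^ m = ∏ r : Fin m, a (f r)) :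
    (∀ r : Fin m, ¬ p ∣ a (f r)) ∧ (∀ r : Fin m, a (f r) ≤ a k) ∧ False := by
  set A := a ⟨0, hn⟩ with hA
  set B := a k with hB
  have hndAB : ¬ p ∣ (A + B) := fun h => hk ((Nat.dvd_add_right hpa1).mp h)
  have hndh : ¬ p ∣ (A + B) / 2 := by
    intro h
    exact hndAB (Dvd.dvd.trans (Dvd.dvd.mul_left h 2) (by rw [Nat.mul_div_cancel' heven]))
  have hndprod : ∀ r : Fin m, ¬ p ∣ a (f r) := by
    intro r hdvd
    apply hndh
    have : p ∣ ∏ r : Fin m, a (f r) :=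
      hdvd.trans (Finset.dvd_prod_of_mem (fun r => a (f r)) (Finset.mem_univ r))
    exact hp.dvd_of_dvd_pow (hgm ▸ this)
  have hle : ∀ r : Fin m, a (f r) ≤ B := by
    intro r
    rcases lt_or_ge (f r) k with h | h
    · exact absurd (hkmin _ h) (hndprod r)
    · exact hanti _ _ h
  refine ⟨hndprod, hle, ?_⟩
  have hBA : B < A := by
    rcases lt_or_eq_of_le (hanti ⟨0, hn⟩ k (Fin.mk_le_of_le_val (Nat.zero_le _))) with h | h
    · exact h
    · exact absurd (show p ∣ a k by rw [h]; exact hpa1) hk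
  have hBh : B < (A + B) / 2 := by
    rw [Nat.lt_div_iff_mul_lt' heven]
    omega
  have hprodle : ∏ r : Fin m, a (f r) ≤ B ^ m := by
    calc ∏ r : Fin m, a (f r) ≤ ∏ _r : Fin m, B :=
          Finset.prod_le_prod (fun _ _ => Nat.zero_le _) (fun r _ => hle r)
      _ = B ^ m := by simp
  have : ((A + B) / 2) ^ m < ((A + B) / 2) ^ m := by
    calc ((A + B) / 2) ^ m = ∏ r : Fin m, a (f r) := hgm
      _ ≤ B ^ m := hprodle
      _ < ((A + B) / 2) ^ m := Nat.pow_lt_pow_left hBh (by omega)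
  exact absurd this (lt_irrefl _)
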